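/- There do not exist positive integers m and n such that both m^2 + n^2 and m^2 - n^2 (with m > n) are perfect squares. -/

import Mathlib

lemma coprime_eq_pow {a b c : ℕ} (k : ℕ) (h : Nat.Coprime a b) (heq : a * b = c ^ k) :
    ∃ d, a = d ^ k :=
  exists_eq_pow_of_mul_eq_pow (Nat.isUnit_iff.mpr h) heq

lemma sq_mod_four (a : ℕ) : a ^ 2 % 4 = 0 ∨ a ^ 2 % 4 = 1 := by
  rcases Nat.even_or_odd a with ⟨c, rfl⟩ | ⟨c, rfl⟩
  · left
    have h : (c + c) ^ 2 = 4 * c ^ 2 := by ring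
    rw [h, Nat.mul_mod_right]
  · right
    have h : (2 * c + 1) ^ 2 = 4 * (c ^ 2 + c) + 1 := by ring
    rw [h, Nat.mul_add_mod]

lemma parity_lemma {m n a b : ℕ} (hg : Nat.Coprime m n) (hn : 0 < n)
    (ha : m ^ 2 + n ^ 2 = a ^ 2) (hb : m ^ 2 = n ^ 2 + b ^ 2) : Odd m ∧ Even n := by
  have hsa := sq_mod_four a
  have hsb := sq_mod_four b
  rcases Nat.even_or_odd m with hme | hmo
  · exfalso
    have hno : Odd n := by
      rcases Nat.even_or_odd n with hne | h
      · exfalso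
        have h2 : (2 : ℕ) ∣ Nat.gcd m n :=
          Nat.dvd_gcd (even_iff_two_dvd.mp hme) (even_iff_two_dvd.mp hne)
        have := Nat.eq_one_of_dvd_one (hg ▸ h2)
        norm_num at this
      · exact h
    have h1 : m ^ 2 % 4 = 0 := by
      obtain ⟨c, rfl⟩ := hme
      have h : (c + c) ^ 2 = 4 * c ^ 2 := by ring
      rw [h, Nat.mul_mod_right]
    have h2 : n ^ 2 % 4 = 1 := by
      obtain ⟨c, rfl⟩ := hno
      have h : (2 * c + 1) ^ 2 = 4 * (c ^ 2 + c) + 1 := by ring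
      rw [h, Nat.mul_add_mod]
    set M := m ^ 2 with hM
    set N := n ^ 2 with hN
    set B := b ^ 2 with hB
    omega
  · constructor
    · exact hmo
    · rcases Nat.even_or_odd n with h | hno
      · exact h
      · exfalso
        have h1 : m ^ 2 % 4 = 1 := by
          obtain ⟨c, rfl⟩ := hmo
          have h : (2 * c + 1) ^ 2 = 4 * (c ^ 2 + c) + 1 := by ring
          rw [h, Nat.mul_add_mod]
        have h2 : n ^ 2 % 4 = 1 := by
          obtain ⟨c, rfl⟩ := hno
          have h : (2 * c + 1) ^ 2 = 4 * (c ^ 2 + c) + 1 := by ring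
          rw [h, Nat.mul_add_mod]
        set M := m ^ 2 with hM
        set N := n ^ 2 with hN
        set A := a ^ 2 with hA
        omega

lemma step2 (m p q : ℕ) (hp : 0 < p) (hq : 0 < q) (hpodd : Odd p)
    (hcop : Nat.Coprime p q) (hm : m ^ 2 = p ^ 4 + 4 * q ^ 4) :
    ∃ r s : ℕ, 0 < r ∧ r < s ∧ s < m ∧
      (∃ a, s ^ 2 + r ^ 2 = a ^ 2) ∧ (∃ b, s ^ 2 = r ^ 2 + b ^ 2) := by
  have hmodd : Odd m := by
    have h1 : Odd (m ^ 2) := by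
      rw [hm]
      rcases hpodd with ⟨c, rfl⟩
      exact ⟨8 * c ^ 4 + 16 * c ^ 3 + 12 * c ^ 2 + 4 * c + 2 * q ^ 4, by ring⟩
    rcases Nat.even_or_odd m with he | ho
    · exact absurd ((Nat.even_pow' two_ne_zero).mpr he) (Nat.not_even_iff_odd.mpr h1)
    · exact ho
  have hq4 : 0 < q ^ 4 := pow_pos hq 4
  have hmp : p ^ 2 < m := by
    have h1 : (p ^ 2) ^ 2 < m ^ 2 := by
      rw [hm]
      have h2 : (p ^ 2) ^ 2 = p ^ 4 := by ring
      linarith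
    exact lt_of_pow_lt_pow_left₀ 2 (Nat.zero_le _) h1
  -- coprime m p
  have hcmp : Nat.Coprime m p := by
    rw [Nat.coprime_comm]
    by_contra hne
    obtain ⟨ℓ, hℓp, hℓ1, hℓ2⟩ := Nat.Prime.not_coprime_iff_dvd.mp hne
    have hℓodd : Odd ℓ := hpodd.of_dvd_nat hℓ1
    have hℓq : ℓ ∣ 4 * q ^ 4 := by
      have h1 : ℓ ∣ m ^ 2 := dvd_pow hℓ2 two_ne_zero
      have h2 : ℓ ∣ p ^ 4 := dvd_pow hℓ1 four_ne_zero
      have h3 := Nat.dvd_sub h1 h2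
      rwa [hm, Nat.add_sub_cancel_left] at h3
    have hℓq4 : ℓ ∣ q ^ 4 := by
      have h2 : Nat.Coprime ℓ 2 := Nat.coprime_two_right.mpr hℓodd
      have h4 : Nat.Coprime ℓ 4 := by
        have h44 : (4 : ℕ) = 2 ^ 2 := by norm_num
        rw [h44]
        exact h2.pow_right 2
      exact h4.dvd_of_dvd_mul_left hℓq
    have hℓqq : ℓ ∣ q := hℓp.dvd_of_dvd_pow hℓq4
    exact hℓp.one_lt.ne' (Nat.eq_one_of_dvd_one (hcop ▸ Nat.dvd_gcd hℓ1 hℓqq))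
  -- write m = p^2 + 2e
  obtain ⟨e, he⟩ : ∃ e, m = p ^ 2 + 2 * e := by
    rcases hmodd with ⟨cm, hcm⟩
    rcases hpodd with ⟨cp, hcp⟩
    refine ⟨cm - (2 * cp ^ 2 + 2 * cp), ?_⟩
    have : p ^ 2 = 2 * (2 * cp ^ 2 + 2 * cp) + 1 := by rw [hcp]; ring
    omega
  have hepos : 0 < e := by omega
  have hef : e * (p ^ 2 + e) = q ^ 4 := by
    have h1 : p ^ 4 + 4 * (e * (p ^ 2 + e)) = p ^ 4 + 4 * q ^ 4 := by
      rw [← hm, he]; ring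
    have h2 := Nat.add_left_cancel h1
    exact Nat.eq_of_mul_eq_mul_left (by norm_num) h2
  -- coprime e (p^2+e)
  have hcef : Nat.Coprime e (p ^ 2 + e) := by
    have h1 : Nat.gcd e (p ^ 2 + e) ∣ p ^ 2 := by
      have := Nat.dvd_sub (Nat.gcd_dvd_right e (p ^ 2 + e)) (Nat.gcd_dvd_left e (p ^ 2 + e))
      simpa using this
    have h2 : Nat.gcd e (p ^ 2 + e) ∣ m := by
      rw [he]
      exact Nat.dvd_add h1 (Dvd.dvd.mul_left (Nat.gcd_dvd_left _ _) 2)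
    have h3 : Nat.gcd e (p ^ 2 + e) ∣ Nat.gcd m (p ^ 2) := Nat.dvd_gcd h2 h1
    have h4 : Nat.Coprime m (p ^ 2) := hcmp.pow_right 2
    rw [h4] at h3
    exact Nat.eq_one_of_dvd_one h3
  obtain ⟨r, hr⟩ := coprime_eq_pow 4 hcef hef
  obtain ⟨s, hs⟩ := coprime_eq_pow 4 hcef.symm (by rw [mul_comm]; exact hef)
  have hs4 : s ^ 4 = r ^ 4 + p ^ 2 := by rw [← hr, ← hs]; ring
  have hrpos : 0 < r := by
    rcases Nat.eq_zero_or_pos r with h | h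
    · rw [h] at hr; simp at hr; omega
    · exact h
  have hrs : r < s := by
    have h1 : r ^ 4 < s ^ 4 := by
      have h0 : 0 < p ^ 2 := pow_pos hp 2
      linarith
    exact lt_of_pow_lt_pow_left₀ 4 (Nat.zero_le _) h1
  have hsm : s < m := by
    have h1 : s ^ 4 < m := by rw [← hs, he]; omega
    have h2 : s ≤ s ^ 4 := Nat.le_self_pow four_ne_zero s
    omega
  -- now factor p^2 = (s^2-r^2)(s^2+r^2)
  obtain ⟨c, hc⟩ : ∃ c, s ^ 2 = r ^ 2 + c := by
    have h1 : r ^ 2 < s ^ 2 := Nat.pow_lt_pow_left hrs two_ne_zero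
    exact ⟨s ^ 2 - r ^ 2, by omega⟩
  have hcp2 : c * (2 * r ^ 2 + c) = p ^ 2 := by
    have h1 : r ^ 4 + c * (2 * r ^ 2 + c) = r ^ 4 + p ^ 2 := by
      rw [← hs4]
      have h2 : s ^ 4 = (r ^ 2 + c) ^ 2 := by rw [← hc]; ring
      rw [h2]; ring
    exact Nat.add_left_cancel h1
  have hcodd : Odd c := by
    have h1 : Odd (c * (2 * r ^ 2 + c)) := by rw [hcp2]; exact hpodd.pow
    exact (Nat.odd_mul.mp h1).1
  have hcoprs : Nat.Coprime r s := by
    have h1 : Nat.Coprime (r ^ 4) (s ^ 4) := by rw [← hr, ← hs]; exact hcef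
    exact ((Nat.coprime_pow_left_iff four_pos _ _).trans (Nat.coprime_pow_right_iff four_pos _ _)).mp h1
  have hcc : Nat.Coprime c (2 * r ^ 2 + c) := by
    by_contra hne
    obtain ⟨ℓ, hℓp, hℓ1, hℓ2⟩ := Nat.Prime.not_coprime_iff_dvd.mp hne
    have hℓodd : Odd ℓ := hcodd.of_dvd_nat hℓ1
    have hℓr2 : ℓ ∣ 2 * r ^ 2 := by
      have := Nat.dvd_sub hℓ2 hℓ1
      simpa using this
    have hℓr : ℓ ∣ r := by
      have h2 : Nat.Coprime ℓ 2 := Nat.coprime_two_right.mpr hℓodd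
      exact hℓp.dvd_of_dvd_pow (h2.dvd_of_dvd_mul_left hℓr2)
    have hℓs : ℓ ∣ s := by
      have h3 : ℓ ∣ s ^ 2 := by rw [hc]; exact Nat.dvd_add (Dvd.dvd.pow hℓr two_ne_zero) hℓ1
      exact hℓp.dvd_of_dvd_pow h3
    exact hℓp.one_lt.ne' (Nat.eq_one_of_dvd_one (hcoprs ▸ Nat.dvd_gcd hℓr hℓs))
  obtain ⟨b, hb⟩ := coprime_eq_pow 2 hcc hcp2
  obtain ⟨a, ha⟩ := coprime_eq_pow 2 hcc.symm (by rw [mul_comm]; exact hcp2)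
  exact ⟨r, s, hrpos, hrs, hsm, ⟨a, by rw [← ha, hc]; ring⟩, ⟨b, by rw [← hb, hc]⟩⟩

lemma descent : ∀ m n a b : ℕ, 0 < n → n < m →
    m ^ 2 + n ^ 2 = a ^ 2 → m ^ 2 = n ^ 2 + b ^ 2 → False := by
  intro m
  induction m using Nat.strong_induction_on with
  | _ m IH =>
  intro n a b hn hnm ha hb
  by_cases hg : Nat.Coprime m n
  case neg =>
    -- reduce to the coprime case by dividing by the gcd
    obtain ⟨m', hm'⟩ := Nat.gcd_dvd_left m n
    obtain ⟨n', hn'⟩ := Nat.gcd_dvd_right m n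
    set g := Nat.gcd m n with hgdef
    have hg0 : 0 < g := Nat.gcd_pos_of_pos_right m hn
    have hg2 : 2 ≤ g := by
      have hg1 : g ≠ 1 := fun h => hg h
      omega
    have hn'pos : 0 < n' := by
      rcases Nat.eq_zero_or_pos n' with h | h
      · rw [h, mul_zero] at hn'; omega
      · exact h
    have hm'n' : n' < m' := by
      by_contra h
      push_neg at h
      have : m ≤ n := by rw [hm', hn']; exact Nat.mul_le_mul_left g h
      omega
    have hm'pos : 0 < m' := by omega
    have hm'm : m' < m := by
      rw [hm']
      calc m' = 1 * m' := (one_mul m').symm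
      _ < g * m' := (Nat.mul_lt_mul_right hm'pos).mpr (by omega)
    -- g divides a
    have hga : g ∣ a := by
      have h1 : a ^ 2 = g ^ 2 * (m' ^ 2 + n' ^ 2) := by rw [← ha, hm', hn']; ring
      exact (Nat.pow_dvd_pow_iff two_ne_zero).mp ⟨m' ^ 2 + n' ^ 2, h1⟩
    obtain ⟨a', ha'⟩ := hga
    -- m'^2 = n'^2 + c for some c, and g divides b
    obtain ⟨c, hc⟩ : ∃ c, m' ^ 2 = n' ^ 2 + c :=
      ⟨m' ^ 2 - n' ^ 2, by
        have := Nat.pow_lt_pow_left hm'n' two_ne_zero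
        omega⟩
    have hgb : g ∣ b := by
      have h1 : b ^ 2 = g ^ 2 * c := by
        have h2 : g ^ 2 * (n' ^ 2 + c) = g ^ 2 * n' ^ 2 + b ^ 2 := by
          rw [← hc]
          have h3 : g ^ 2 * m' ^ 2 = m ^ 2 := by rw [hm']; ring
          have h4 : g ^ 2 * n' ^ 2 = n ^ 2 := by rw [hn']; ring
          rw [h3, hb, h4]
        have h5 : g ^ 2 * n' ^ 2 + g ^ 2 * c = g ^ 2 * n' ^ 2 + b ^ 2 := by
          rw [← h2]; ring
        omega
      exact (Nat.pow_dvd_pow_iff two_ne_zero).mp ⟨c, h1⟩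
    obtain ⟨b', hb'⟩ := hgb
    apply IH m' hm'm n' a' b' hn'pos hm'n'
    · have h1 : g ^ 2 * (m' ^ 2 + n' ^ 2) = g ^ 2 * a' ^ 2 := by
        have : (g * m') ^ 2 + (g * n') ^ 2 = (g * a') ^ 2 := by
          rw [← hm', ← hn', ← ha']; exact ha
        calc g ^ 2 * (m' ^ 2 + n' ^ 2) = (g * m') ^ 2 + (g * n') ^ 2 := by ring
        _ = (g * a') ^ 2 := this
        _ = g ^ 2 * a' ^ 2 := by ring
      exact Nat.eq_of_mul_eq_mul_left (by positivity) h1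
    · have h1 : g ^ 2 * m' ^ 2 = g ^ 2 * (n' ^ 2 + b' ^ 2) := by
        have : (g * m') ^ 2 = (g * n') ^ 2 + (g * b') ^ 2 := by
          rw [← hm', ← hn', ← hb']; exact hb
        calc g ^ 2 * m' ^ 2 = (g * m') ^ 2 := by ring
        _ = (g * n') ^ 2 + (g * b') ^ 2 := this
        _ = g ^ 2 * (n' ^ 2 + b' ^ 2) := by ring
      exact Nat.eq_of_mul_eq_mul_left (by positivity) h1
  case pos =>
  obtain ⟨hmo, hne⟩ := parity_lemma hg hn ha hb
  -- a and b are odd, a > b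
  have hao : Odd a := by
    have h1 : Odd (a ^ 2) := by
      rw [← ha]
      rcases hmo with ⟨c, hc⟩
      rcases hne with ⟨d, hd⟩
      exact ⟨2 * c ^ 2 + 2 * c + 2 * d ^ 2, by rw [hc, hd]; ring⟩
    rcases Nat.even_or_odd a with h | h
    · exact absurd ((Nat.even_pow' two_ne_zero).mpr h) (Nat.not_even_iff_odd.mpr h1)
    · exact h
  have hbo : Odd b := by
    have h1 : Odd (b ^ 2) := by
      rcases hmo with ⟨c, hc⟩
      rcases hne with ⟨d, hd⟩
      have h2 : 2 * (2 * c ^ 2 + 2 * c) + 1 = 2 * (2 * d ^ 2) + b ^ 2 := by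
        have h3 : m ^ 2 = 2 * (2 * c ^ 2 + 2 * c) + 1 := by rw [hc]; ring
        have h4 : n ^ 2 = 2 * (2 * d ^ 2) := by rw [hd]; ring
        rw [← h3, ← h4]; exact hb
      rcases Nat.even_or_odd (b ^ 2) with ⟨x, hx⟩ | h
      · omega
      · exact h
    rcases Nat.even_or_odd b with h | h
    · exact absurd ((Nat.even_pow' two_ne_zero).mpr h) (Nat.not_even_iff_odd.mpr h1)
    · exact h
  have hab2 : a ^ 2 = b ^ 2 + 2 * n ^ 2 := by
    have h1 : a ^ 2 = m ^ 2 + n ^ 2 := ha.symm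
    linarith [hb]
  have hab : b < a := by
    have h1 : b ^ 2 < a ^ 2 := by
      have := pow_pos hn 2
      nlinarith [pow_pos hn 2]
    exact lt_of_pow_lt_pow_left₀ 2 (Nat.zero_le _) h1
  -- a = b + 2u
  obtain ⟨u, hu, hupos⟩ : ∃ u, a = b + 2 * u ∧ 0 < u := by
    rcases hao with ⟨x, hx⟩
    rcases hbo with ⟨y, hy⟩
    exact ⟨x - y, by omega, by omega⟩
  -- key identities
  have hn2 : n ^ 2 = 2 * (u * (u + b)) := by
    have h1 : a ^ 2 = b ^ 2 + 4 * (u * (u + b)) := by rw [hu]; ring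
    linarith [hab2]
  have hm2 : m ^ 2 = u ^ 2 + (u + b) ^ 2 := by
    have h3 : u ^ 2 + (u + b) ^ 2 = 2 * (u * (u + b)) + b ^ 2 := by ring
    linarith [hb, hn2]
  -- u and u + b are coprime
  have hcuv : Nat.Coprime u (u + b) := by
    set d := Nat.gcd u (u + b) with hd
    have hdu : d ∣ u := Nat.gcd_dvd_left _ _
    have hdv : d ∣ u + b := Nat.gcd_dvd_right _ _
    have hdb : d ∣ b := by
      have h := Nat.dvd_sub hdv hdu
      simpa using h
    have hda : d ∣ a := by rw [hu]; exact Nat.dvd_add hdb (Dvd.dvd.mul_left hdu 2)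
    have h2m : d ^ 2 ∣ 2 * m ^ 2 := by
      have h1 : d ^ 2 ∣ a ^ 2 + b ^ 2 := Nat.dvd_add (pow_dvd_pow_of_dvd hda 2) (pow_dvd_pow_of_dvd hdb 2)
      have h2 : a ^ 2 + b ^ 2 = 2 * m ^ 2 := by linarith [ha, hb]
      rwa [h2] at h1
    have h2n : d ^ 2 ∣ 2 * n ^ 2 := by
      have h1 := Nat.dvd_sub (pow_dvd_pow_of_dvd hda 2) (pow_dvd_pow_of_dvd hdb 2)
      have h2 : a ^ 2 - b ^ 2 = 2 * n ^ 2 := by omega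
      rwa [h2] at h1
    have h3 : d ^ 2 ∣ 2 := by
      have h4 : d ^ 2 ∣ Nat.gcd (2 * m ^ 2) (2 * n ^ 2) := Nat.dvd_gcd h2m h2n
      rwa [Nat.gcd_mul_left, Nat.Coprime.gcd_eq_one (Nat.Coprime.pow 2 2 hg), mul_one] at h4
    have h5 : d ≤ 1 := by
      by_contra h
      push_neg at h
      have : 4 ≤ d ^ 2 := by nlinarith
      have := Nat.le_of_dvd (by norm_num) h3
      omega
    have h6 : d ≠ 0 := by
      intro h0
      have := Nat.eq_zero_of_gcd_eq_zero_left (hd ▸ h0)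
      omega
    omega
  -- n = 2k, u(u+b) = 2k^2
  obtain ⟨k, hk⟩ := hne
  have huv2 : u * (u + b) = 2 * k ^ 2 := by
    have h1 : n ^ 2 = 4 * k ^ 2 := by rw [hk]; ring
    omega
  -- one of u, u+b is even
  have heuv : Even u ∨ Even (u + b) := by
    rcases Nat.even_or_odd u with h | h1
    · exact Or.inl h
    rcases Nat.even_or_odd (u + b) with h | h2
    · exact Or.inr h
    exfalso
    have : Odd (u * (u + b)) := h1.mul h2
    rw [huv2] at this
    rcases this with ⟨x, hx⟩
    omega
  -- in both cases, get m^2 = p^4 + 4 q^4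
  obtain ⟨p, q, hp, hq, hpodd, hpq, hmpq⟩ :
      ∃ p q : ℕ, 0 < p ∧ 0 < q ∧ Odd p ∧ Nat.Coprime p q ∧ m ^ 2 = p ^ 4 + 4 * q ^ 4 := by
    rcases heuv with ⟨w, hw⟩ | ⟨w, hw⟩
    · -- u = 2w, v = u + b odd
      have hwpos : 0 < w := by omega
      have hwv : (u + b) * w = k ^ 2 := by
        have h1 : 2 * ((u + b) * w) = 2 * k ^ 2 := by rw [← huv2, hw]; ring
        exact Nat.eq_of_mul_eq_mul_left two_pos h1
      have hcwv : Nat.Coprime (u + b) w :=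
        (Nat.Coprime.coprime_dvd_left ⟨2, by omega⟩ hcuv).symm
      obtain ⟨p, hpdef⟩ := coprime_eq_pow 2 hcwv hwv
      obtain ⟨q, hqdef⟩ := coprime_eq_pow 2 hcwv.symm (by rw [mul_comm]; exact hwv)
      have hvodd : Odd (u + b) := by
        rcases Nat.even_or_odd (u + b) with h | h
        · exfalso
          obtain ⟨t, ht⟩ := h
          have h2 : (2 : ℕ) ∣ Nat.gcd u (u + b) := Nat.dvd_gcd ⟨w, by omega⟩ ⟨t, by omega⟩
          have := Nat.eq_one_of_dvd_one (hcuv ▸ h2)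
          omega
        · exact h
      refine ⟨p, q, ?_, ?_, ?_, ?_, ?_⟩
      · rcases Nat.eq_zero_or_pos p with h | h
        · rw [h] at hpdef; simp at hpdef; omega
        · exact h
      · rcases Nat.eq_zero_or_pos q with h | h
        · rw [h] at hqdef; simp at hqdef; omega
        · exact h
      · rw [hpdef] at hvodd
        rcases Nat.even_or_odd p with h | h
        · exact absurd ((Nat.even_pow' two_ne_zero).mpr h) (Nat.not_even_iff_odd.mpr hvodd)
        · exact h
      · have h1 : Nat.Coprime (p ^ 2) (q ^ 2) := by rw [← hpdef, ← hqdef]; exact hcwv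
        exact ((Nat.coprime_pow_left_iff two_pos _ _).trans (Nat.coprime_pow_right_iff two_pos _ _)).mp h1
      · rw [hqdef] at hw
        rw [hm2, hpdef, hw]; ring
    · -- u + b = 2w, u odd
      have hwpos : 0 < w := by omega
      have huw : u * w = k ^ 2 := by
        have h1 : 2 * (u * w) = 2 * k ^ 2 := by rw [← huv2, hw]; ring
        exact Nat.eq_of_mul_eq_mul_left two_pos h1
      have hcuw : Nat.Coprime u w :=
        Nat.Coprime.coprime_dvd_right ⟨2, by omega⟩ hcuv
      obtain ⟨p, hpdef⟩ := coprime_eq_pow 2 hcuw huw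
      obtain ⟨q, hqdef⟩ := coprime_eq_pow 2 hcuw.symm (by rw [mul_comm]; exact huw)
      have huodd : Odd u := by
        rcases Nat.even_or_odd u with h | h
        · exfalso
          obtain ⟨t, ht⟩ := h
          have h2 : (2 : ℕ) ∣ Nat.gcd u (u + b) := Nat.dvd_gcd ⟨t, by omega⟩ ⟨w, by omega⟩
          have := Nat.eq_one_of_dvd_one (hcuv ▸ h2)
          omega
        · exact h
      refine ⟨p, q, ?_, ?_, ?_, ?_, ?_⟩
      · rcases Nat.eq_zero_or_pos p with h | h
        · rw [h] at hpdef; simp at hpdef; omega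
        · exact h
      · rcases Nat.eq_zero_or_pos q with h | h
        · rw [h] at hqdef; simp at hqdef; omega
        · exact h
      · rw [hpdef] at huodd
        rcases Nat.even_or_odd p with h | h
        · exact absurd ((Nat.even_pow' two_ne_zero).mpr h) (Nat.not_even_iff_odd.mpr huodd)
        · exact h
      · have h1 : Nat.Coprime (p ^ 2) (q ^ 2) := by rw [← hpdef, ← hqdef]; exact hcuw
        exact ((Nat.coprime_pow_left_iff two_pos _ _).trans (Nat.coprime_pow_right_iff two_pos _ _)).mp h1
      · rw [hqdef] at hw
        rw [hm2, hw, hpdef]; ring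
  obtain ⟨r, s, hr, hrs, hsm, ⟨a', ha'⟩, ⟨b', hb'⟩⟩ := step2 m p q hp hq hpodd hpq hmpq
  exact IH s hsm r a' b' hr hrs ha' hb'

theorem stmt_4 : ¬ ∃ m n : ℕ, 0 < n ∧ n < m ∧
    (∃ a : ℕ, m^2 + n^2 = a^2) ∧ (∃ b : ℕ, m^2 - n^2 = b^2) := by
  rintro ⟨m, n, hn, hnm, ⟨a, ha⟩, ⟨b, hb⟩⟩
  have h1 : n ^ 2 < m ^ 2 := Nat.pow_lt_pow_left hnm two_ne_zero
  have hb' : m ^ 2 = n ^ 2 + b ^ 2 := by omega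
  exact descent m n a b hn hnm ha hb'
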